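/- For every L ≥ 1 there exists a constant C(L) > 0 with the following property. Let h̃ : ℝ → ℝ be a continuously differentiable homeomorphism such that 1/L ≤ |(h̃(x) − h̃(y))/(x − y)| ≤ L for all x ≠ y and such that h̃' − 1 ∈ L²(ℝ). Then for all complex-valued Schwartz functions f, g ∈ 𝒮(ℝ), the function S(α) := (1/π) ∫_ℝ ((f(α) − f(β))/(α − β)) · (((h̃(α) − α) − (h̃(β) − β))/(h̃(α) − h̃(β))) · g(β) dβ (the integral converging absolutely for each α) satisfies ‖S‖_{L²(ℝ)} ≤ C(L)·‖f'‖_{L²(ℝ)}·‖h̃' − 1‖_{L²(ℝ)}·‖g‖_{L²(ℝ)}. -/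

import Mathlib

open MeasureTheory Complex
open scoped ENNReal NNReal

open Set

private lemma enn_sq (x : ℝ≥0∞) : x ^ (2:ℝ) = x ^ 2 := by
  rw [← ENNReal.rpow_natCast]; norm_num

private lemma lintegral_sq_cs (μ : Measure ℝ) {f g : ℝ → ℝ≥0∞}
    (hf : AEMeasurable f μ) (hg : AEMeasurable g μ) :
    (∫⁻ x, f x * g x ∂μ) ^ 2 ≤ (∫⁻ x, f x ^ 2 ∂μ) * (∫⁻ x, g x ^ 2 ∂μ) := by
  have hconj : Real.HolderConjugate 2 2 := Real.HolderConjugate.two_two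
  have h : (∫⁻ x, f x * g x ∂μ)
      ≤ (∫⁻ x, f x ^ (2:ℝ) ∂μ) ^ (1/2:ℝ) * (∫⁻ x, g x ^ (2:ℝ) ∂μ) ^ (1/2:ℝ) :=
    ENNReal.lintegral_mul_le_Lp_mul_Lq μ hconj hf hg
  calc (∫⁻ x, f x * g x ∂μ) ^ 2
      ≤ ((∫⁻ x, f x ^ (2:ℝ) ∂μ) ^ (1/2:ℝ) * (∫⁻ x, g x ^ (2:ℝ) ∂μ) ^ (1/2:ℝ)) ^ 2 :=
        pow_le_pow_left' h 2
    _ = (∫⁻ x, f x ^ 2 ∂μ) * (∫⁻ x, g x ^ 2 ∂μ) := by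
        rw [mul_pow, ← enn_sq, ← enn_sq, ← ENNReal.rpow_mul, ← ENNReal.rpow_mul]
        norm_num

private lemma hardy_half (ψ : ℝ → ℝ≥0∞) (hψ : Measurable ψ) :
    ∫⁻ t in Ioi (0:ℝ), ((∫⁻ s in Ioo 0 t, ψ s) / ENNReal.ofReal t) ^ 2
      ≤ 4 * ∫⁻ s in Ioi (0:ℝ), ψ s ^ 2 := by
  set J : ℝ → ℝ≥0∞ := fun t => ∫⁻ s in Ioo 0 t, ψ s ^ 2 * ENNReal.ofReal (Real.sqrt s) with hJ
  have hwm : Measurable fun s : ℝ => ENNReal.ofReal (s ^ (1/4 : ℝ)) :=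
    ENNReal.measurable_ofReal.comp (by measurability)
  have key : ∀ t ∈ Ioi (0:ℝ), ((∫⁻ s in Ioo 0 t, ψ s) / ENNReal.ofReal t) ^ 2
      ≤ ENNReal.ofReal (2 * t ^ (-(3:ℝ)/2)) * J t := by
    intro t ht
    have ht0 : (0:ℝ) < t := ht
    set w : ℝ → ℝ≥0∞ := fun s => ENNReal.ofReal (s ^ (1/4 : ℝ)) with hw
    -- Cauchy–Schwarz
    have h1 : ∫⁻ s in Ioo 0 t, ψ s = ∫⁻ s in Ioo 0 t, (ψ s * w s) * (w s)⁻¹ := by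
      refine setLIntegral_congr_fun measurableSet_Ioo
        (fun s hs => ?_)
      have hws : w s ≠ 0 := by
        simp only [hw, ne_eq, ENNReal.ofReal_eq_zero, not_le]
        exact Real.rpow_pos_of_pos hs.1 _
      rw [mul_assoc, ENNReal.mul_inv_cancel hws ENNReal.ofReal_ne_top, mul_one]
    have h2 : ∫⁻ s in Ioo 0 t, (ψ s * w s) ^ 2 = J t := by
      refine setLIntegral_congr_fun measurableSet_Ioo
        (fun s hs => ?_)
      rw [mul_pow]
      congr 1
      rw [hw, ← ENNReal.ofReal_pow (Real.rpow_nonneg hs.1.le _),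
        ← Real.rpow_natCast (s ^ (1/4:ℝ)) 2, ← Real.rpow_mul hs.1.le,
        Real.sqrt_eq_rpow]
      norm_num
    have h3 : ∫⁻ s in Ioo 0 t, ((w s)⁻¹) ^ 2
        = ∫⁻ s in Ioo 0 t, ENNReal.ofReal (s ^ (-(1:ℝ)/2)) := by
      refine setLIntegral_congr_fun measurableSet_Ioo
        (fun s hs => ?_)
      rw [hw, ← ENNReal.ofReal_inv_of_pos (Real.rpow_pos_of_pos hs.1 _),
        ← Real.rpow_neg hs.1.le,
        ← ENNReal.ofReal_pow (Real.rpow_nonneg hs.1.le _),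
        ← Real.rpow_natCast (s ^ (-(1/4):ℝ)) 2, ← Real.rpow_mul hs.1.le]
      norm_num
    have hcs : (∫⁻ s in Ioo 0 t, ψ s) ^ 2
        ≤ J t * ∫⁻ s in Ioo 0 t, ENNReal.ofReal (s ^ (-(1:ℝ)/2)) := by
      rw [h1, ← h2, ← h3]
      exact lintegral_sq_cs _ ((hψ.mul hwm).aemeasurable) ((hwm.inv).aemeasurable)
    -- compute the weight integral
    have hY : (∫⁻ s in Ioo 0 t, ENNReal.ofReal (s ^ (-(1:ℝ)/2)))
        = ENNReal.ofReal (2 * Real.sqrt t) := by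
      have hint : IntegrableOn (fun s : ℝ => s ^ (-(1:ℝ)/2)) (Ioo 0 t) := by
        have h := (intervalIntegral.intervalIntegrable_rpow'
          (a := 0) (b := t) (r := -(1:ℝ)/2) (by norm_num))
        rw [intervalIntegrable_iff_integrableOn_Ioc_of_le ht0.le] at h
        exact h.mono_set Ioo_subset_Ioc_self
      rw [← ofReal_integral_eq_lintegral_ofReal hint
        ((ae_restrict_iff' measurableSet_Ioo).2
          (Filter.Eventually.of_forall fun s hs => Real.rpow_nonneg hs.1.le _))]
      congr 1
      rw [← integral_Ioc_eq_integral_Ioo, ← intervalIntegral.integral_of_le ht0.le,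
        integral_rpow (Or.inl (by norm_num)), Real.sqrt_eq_rpow,
        Real.zero_rpow (by norm_num : -(1:ℝ)/2 + 1 ≠ 0)]
      norm_num
      ring
    calc ((∫⁻ s in Ioo 0 t, ψ s) / ENNReal.ofReal t) ^ 2
        = (∫⁻ s in Ioo 0 t, ψ s) ^ 2 / ENNReal.ofReal t ^ 2 := by
          rw [div_eq_mul_inv, mul_pow, ← ENNReal.inv_pow, ← div_eq_mul_inv]
      _ ≤ (J t * ENNReal.ofReal (2 * Real.sqrt t)) / ENNReal.ofReal t ^ 2 := by
          apply ENNReal.div_le_div_right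
          rw [← hY]; exact hcs
      _ = ENNReal.ofReal (2 * t ^ (-(3:ℝ)/2)) * J t := by
          rw [mul_div_assoc, ← ENNReal.ofReal_pow ht0.le,
            ← ENNReal.ofReal_div_of_pos (pow_pos ht0 2), mul_comm]
          congr 2
          rw [Real.sqrt_eq_rpow, ← Real.rpow_natCast t 2, mul_div_assoc,
            ← Real.rpow_sub ht0]
          norm_num
  -- swap the order of integration
  set A : Set (ℝ × ℝ) := {p | 0 < p.2 ∧ p.2 < p.1} with hA
  set H : ℝ × ℝ → ℝ≥0∞ := fun p =>
    ENNReal.ofReal (2 * p.1 ^ (-(3:ℝ)/2)) * (ψ p.2 ^ 2 * ENNReal.ofReal (Real.sqrt p.2)) with hH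
  have hAm : MeasurableSet A :=
    (measurableSet_lt measurable_const measurable_snd).inter
      (measurableSet_lt measurable_snd measurable_fst)
  have hHm : Measurable H := by
    apply Measurable.mul
    · exact ENNReal.measurable_ofReal.comp (by fun_prop)
    · exact ((hψ.comp measurable_snd).pow_const 2).mul
        (ENNReal.measurable_ofReal.comp (by fun_prop))
  have claim1 : ∀ t ∈ Ioi (0:ℝ), ENNReal.ofReal (2 * t ^ (-(3:ℝ)/2)) * J t
      = ∫⁻ s in Ioi (0:ℝ), (A.indicator H) (t, s) := by
    intro t _
    have e1 : ∀ s : ℝ, (A.indicator H) (t, s)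
        = (Ioo (0:ℝ) t).indicator (fun s => H (t, s)) s := by
      intro s
      rw [Set.indicator_apply, Set.indicator_apply]
      congr 1
    simp_rw [e1]
    rw [lintegral_indicator measurableSet_Ioo, Measure.restrict_restrict measurableSet_Ioo,
      inter_eq_left.mpr (fun x hx => hx.1)]
    exact (lintegral_const_mul _
      ((hψ.pow_const 2).mul Real.continuous_sqrt.measurable.ennreal_ofReal)).symm
  have claim2 : ∀ s ∈ Ioi (0:ℝ), (∫⁻ t in Ioi (0:ℝ), (A.indicator H) (t, s))
      = 4 * ψ s ^ 2 := by
    intro s hs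
    have hs0 : (0:ℝ) < s := hs
    have e1 : ∀ t : ℝ, (A.indicator H) (t, s)
        = (Ioi s).indicator (fun t => H (t, s)) t := by
      intro t
      rw [Set.indicator_apply, Set.indicator_apply]
      have : (t, s) ∈ A ↔ t ∈ Ioi s := by
        simp only [hA, mem_setOf_eq, mem_Ioi]
        exact ⟨fun h => h.2, fun h => ⟨hs0, h⟩⟩
      by_cases h : (t, s) ∈ A
      · rw [if_pos h, if_pos (this.mp h)]
      · rw [if_neg h, if_neg (fun hc => h (this.mpr hc))]
    simp_rw [e1]
    rw [lintegral_indicator measurableSet_Ioi, Measure.restrict_restrict measurableSet_Ioi,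
      inter_eq_left.mpr (Ioi_subset_Ioi hs0.le)]
    simp only [hH]
    rw [lintegral_mul_const _
      ((by measurability : Measurable fun a : ℝ => 2 * a ^ (-(3:ℝ)/2)).ennreal_ofReal)]
    have hW : (∫⁻ t in Ioi s, ENNReal.ofReal (2 * t ^ (-(3:ℝ)/2)))
        = ENNReal.ofReal (4 * s ^ (-(1:ℝ)/2)) := by
      have hint : IntegrableOn (fun t : ℝ => 2 * t ^ (-(3:ℝ)/2)) (Ioi s) :=
        (integrableOn_Ioi_rpow_of_lt (by norm_num) hs0).const_mul 2
      rw [← ofReal_integral_eq_lintegral_ofReal hint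
        ((ae_restrict_iff' measurableSet_Ioi).2
          (Filter.Eventually.of_forall fun t ht =>
            mul_nonneg (by norm_num) (Real.rpow_nonneg (hs0.trans ht).le _)))]
      congr 1
      rw [MeasureTheory.integral_const_mul, integral_Ioi_rpow_of_lt (by norm_num) hs0]
      norm_num
      ring
    rw [hW]
    have h4 : ENNReal.ofReal (4 * s ^ (-(1:ℝ)/2)) * ENNReal.ofReal (Real.sqrt s) = 4 := by
      rw [← ENNReal.ofReal_mul (by positivity), Real.sqrt_eq_rpow, mul_assoc,
        ← Real.rpow_add hs0]
      norm_num
    rw [mul_comm (ψ s ^ 2), ← mul_assoc, h4]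
  calc ∫⁻ t in Ioi (0:ℝ), ((∫⁻ s in Ioo 0 t, ψ s) / ENNReal.ofReal t) ^ 2
      ≤ ∫⁻ t in Ioi (0:ℝ), ENNReal.ofReal (2 * t ^ (-(3:ℝ)/2)) * J t :=
        setLIntegral_mono' measurableSet_Ioi key
    _ = ∫⁻ t in Ioi (0:ℝ), ∫⁻ s in Ioi (0:ℝ), (A.indicator H) (t, s) :=
        setLIntegral_congr_fun measurableSet_Ioi claim1
    _ = ∫⁻ s in Ioi (0:ℝ), ∫⁻ t in Ioi (0:ℝ), (A.indicator H) (t, s) := by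
        apply lintegral_lintegral_swap
        exact (hHm.indicator hAm).aemeasurable
    _ = ∫⁻ s in Ioi (0:ℝ), 4 * ψ s ^ 2 :=
        setLIntegral_congr_fun measurableSet_Ioi claim2
    _ = 4 * ∫⁻ s in Ioi (0:ℝ), ψ s ^ 2 :=
        lintegral_const_mul _ (hψ.pow_const 2)

private lemma hardy_centered (φ : ℝ → ℝ≥0∞) (hφ : Measurable φ) (c : ℝ) :
    ∫⁻ x, ((∫⁻ s in uIoc x c, φ s) / ENNReal.ofReal |c - x|) ^ 2
      ≤ 8 * ∫⁻ s, φ s ^ 2 := by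
  set G : ℝ → ℝ≥0∞ := fun x => ((∫⁻ s in uIoc x c, φ s) / ENNReal.ofReal |c - x|) ^ 2 with hG
  have hsub : MeasurePreserving (fun t : ℝ => c - t) volume volume :=
    Measure.measurePreserving_sub_left volume c
  have hsube : MeasurableEmbedding (fun t : ℝ => c - t) :=
    (MeasurableEquiv.subLeft c).measurableEmbedding
  have hadd : MeasurePreserving (fun t : ℝ => c + t) volume volume :=
    measurePreserving_add_left volume c
  have hadde : MeasurableEmbedding (fun t : ℝ => c + t) :=
    (MeasurableEquiv.addLeft c).measurableEmbedding
  have split : ∫⁻ x, G x = (∫⁻ x in Iio c, G x) + ∫⁻ x in Ici c, G x := by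
    rw [← lintegral_add_compl G measurableSet_Iio, compl_Iio]
  have left_piece : (∫⁻ x in Iio c, G x) ≤ 4 * ∫⁻ s, φ s ^ 2 := by
    have hpre : (fun t : ℝ => c - t) ⁻¹' (Iio c) = Ioi 0 := by
      ext t; simp [sub_lt_self_iff]
    have e0 : (∫⁻ x in Iio c, G x) = ∫⁻ t in Ioi (0:ℝ), G (c - t) := by
      rw [← hsub.setLIntegral_comp_preimage_emb hsube G (Iio c), hpre]
    rw [e0]
    have e1 : ∀ t ∈ Ioi (0:ℝ), G (c - t)
        = ((∫⁻ u in Ioo 0 t, φ (c - u)) / ENNReal.ofReal t) ^ 2 := by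
      intro t ht
      have ht0 : (0:ℝ) < t := ht
      have habs : |c - (c - t)| = t := by rw [abs_eq_self.mpr (by linarith)]; ring_nf
      have hset : uIoc (c - t) c = Ioc (c - t) c := by
        rw [uIoc_of_le (by linarith)]
      have hpre2 : (fun u : ℝ => c - u) ⁻¹' (Ioc (c - t) c) = Ico 0 t := by
        ext u
        simp only [mem_preimage, mem_Ioc, mem_Ico]
        constructor <;> intro h <;> constructor <;> linarith [h.1, h.2]
      have hinner : (∫⁻ s in uIoc (c - t) c, φ s) = ∫⁻ u in Ioo 0 t, φ (c - u) := by
        rw [hset, ← hsub.setLIntegral_comp_preimage_emb hsube φ (Ioc (c - t) c), hpre2,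
          ← Measure.restrict_congr_set Ioo_ae_eq_Ico]
      rw [hG]
      simp only []
      rw [hinner, habs]
    calc (∫⁻ t in Ioi (0:ℝ), G (c - t))
        = ∫⁻ t in Ioi (0:ℝ), ((∫⁻ u in Ioo 0 t, φ (c - u)) / ENNReal.ofReal t) ^ 2 :=
          setLIntegral_congr_fun measurableSet_Ioi e1
      _ ≤ 4 * ∫⁻ u in Ioi (0:ℝ), φ (c - u) ^ 2 :=
          hardy_half _ (hφ.comp (measurable_const.sub measurable_id))
      _ ≤ 4 * ∫⁻ u, φ (c - u) ^ 2 := by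
          gcongr; exact Measure.restrict_le_self
      _ = 4 * ∫⁻ s, φ s ^ 2 := by
          rw [hsub.lintegral_comp_emb hsube (fun s => φ s ^ 2)]
  have right_piece : (∫⁻ x in Ici c, G x) ≤ 4 * ∫⁻ s, φ s ^ 2 := by
    have e00 : (∫⁻ x in Ici c, G x) = ∫⁻ x in Ioi c, G x := by
      rw [← Measure.restrict_congr_set Ioi_ae_eq_Ici]
    have hpre : (fun t : ℝ => c + t) ⁻¹' (Ioi c) = Ioi 0 := by
      ext t; simp
    have e0 : (∫⁻ x in Ioi c, G x) = ∫⁻ t in Ioi (0:ℝ), G (c + t) := by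
      rw [← hadd.setLIntegral_comp_preimage_emb hadde G (Ioi c), hpre]
    rw [e00, e0]
    have e1 : ∀ t ∈ Ioi (0:ℝ), G (c + t)
        = ((∫⁻ u in Ioo 0 t, φ (c + u)) / ENNReal.ofReal t) ^ 2 := by
      intro t ht
      have ht0 : (0:ℝ) < t := ht
      have habs : |c - (c + t)| = t := by
        rw [show c - (c + t) = -t by ring, abs_neg, abs_eq_self.mpr ht0.le]
      have hset : uIoc (c + t) c = Ioc c (c + t) := by
        rw [uIoc_of_ge (by linarith)]
      have hpre2 : (fun u : ℝ => c + u) ⁻¹' (Ioc c (c + t)) = Ioc 0 t := by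
        ext u
        simp only [mem_preimage, mem_Ioc]
        constructor <;> intro h <;> constructor <;> linarith [h.1, h.2]
      have hinner : (∫⁻ s in uIoc (c + t) c, φ s) = ∫⁻ u in Ioo 0 t, φ (c + u) := by
        rw [hset, ← hadd.setLIntegral_comp_preimage_emb hadde φ (Ioc c (c + t)), hpre2,
          ← Measure.restrict_congr_set Ioo_ae_eq_Ioc]
      rw [hG]
      simp only []
      rw [hinner, habs]
    calc (∫⁻ t in Ioi (0:ℝ), G (c + t))
        = ∫⁻ t in Ioi (0:ℝ), ((∫⁻ u in Ioo 0 t, φ (c + u)) / ENNReal.ofReal t) ^ 2 :=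
          setLIntegral_congr_fun measurableSet_Ioi e1
      _ ≤ 4 * ∫⁻ u in Ioi (0:ℝ), φ (c + u) ^ 2 :=
          hardy_half _ (hφ.comp (measurable_const.add measurable_id))
      _ ≤ 4 * ∫⁻ u, φ (c + u) ^ 2 := by
          gcongr; exact Measure.restrict_le_self
      _ = 4 * ∫⁻ s, φ s ^ 2 := by
          rw [hadd.lintegral_comp_emb hadde (fun s => φ s ^ 2)]
  calc ∫⁻ x, G x = (∫⁻ x in Iio c, G x) + ∫⁻ x in Ici c, G x := split
    _ ≤ 4 * (∫⁻ s, φ s ^ 2) + 4 * ∫⁻ s, φ s ^ 2 := add_le_add left_piece right_piece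
    _ = 8 * ∫⁻ s, φ s ^ 2 := by ring

section helpers
variable {E : Type*} [NormedAddCommGroup E]

private lemma elp2 (u : ℝ → E) :
    eLpNorm u 2 volume = (∫⁻ x, (‖u x‖₊ : ℝ≥0∞) ^ 2) ^ (1/2:ℝ) := by
  rw [eLpNorm_eq_lintegral_rpow_enorm_toReal two_ne_zero ENNReal.ofNat_ne_top]
  simp only [ENNReal.toReal_ofNat]
  congr 1
  apply lintegral_congr
  intro x
  rw [enn_sq, enorm_eq_nnnorm]

end helpers

/-- for every `L ≥ 1` there is `C(L) > 0` so that for every `C¹`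
bi-Lipschitz homeomorphism `h̃ : ℝ → ℝ` with `1/L ≤ |(h̃(x) − h̃(y))/(x − y)| ≤ L` and
`h̃' − 1 ∈ L²`, and all Schwartz `f, g`, the function
`S(α) = (1/π) ∫ ((f(α)−f(β))/(α−β)) · (((h̃(α)−α)−(h̃(β)−β))/(h̃(α)−h̃(β))) · g(β) dβ`
(absolutely convergent) satisfies `‖S‖_{L²} ≤ C(L)‖f'‖_{L²}‖h̃' − 1‖_{L²}‖g‖_{L²}`. -/
theorem statement17 : ∀ L : ℝ, 1 ≤ L → ∃ C : ℝ, 0 < C ∧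
    ∀ htil : ℝ → ℝ,
      ContDiff ℝ 1 htil → Function.Bijective htil →
      (∀ x y : ℝ, x ≠ y →
        1 / L ≤ |(htil x - htil y) / (x - y)| ∧ |(htil x - htil y) / (x - y)| ≤ L) →
      MemLp (fun x : ℝ => deriv htil x - 1) 2 volume →
      ∀ f g : SchwartzMap ℝ ℂ,
        (∀ α : ℝ, Integrable (fun β : ℝ =>
            ((f α - f β) / ((α - β : ℝ) : ℂ)) *
              ((((htil α - α) - (htil β - β)) / (htil α - htil β) : ℝ) : ℂ) * g β)) ∧
        eLpNorm (fun α : ℝ => ((1 / Real.pi : ℝ) : ℂ) *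
            ∫ β : ℝ, ((f α - f β) / ((α - β : ℝ) : ℂ)) *
              ((((htil α - α) - (htil β - β)) / (htil α - htil β) : ℝ) : ℂ) * g β) 2 volume
          ≤ ENNReal.ofReal C * eLpNorm (deriv (⇑f)) 2 volume *
              eLpNorm (fun x : ℝ => deriv htil x - 1) 2 volume *
              eLpNorm (⇑g) 2 volume := by
  intro L hL
  have hL0 : (0:ℝ) < L := lt_of_lt_of_le one_pos hL
  refine ⟨8 * L, by linarith, ?_⟩
  intro htil hC1 hbij hLip hmem f g
  have hdiff : Differentiable ℝ htil := hC1.differentiable one_ne_zero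
  have hdc : Continuous (deriv htil) := hC1.continuous_deriv le_rfl
  have hhc : Continuous htil := hC1.continuous
  have hfd : Differentiable ℝ (⇑f) := (f.smooth 1).differentiable one_ne_zero
  have hfdc : Continuous (deriv (⇑f)) := (f.smooth 1).continuous_deriv le_rfl
  set φh : ℝ → ℝ := fun x => deriv htil x - 1 with hφh
  have hφhc : Continuous φh := hdc.sub continuous_const
  -- bi-Lipschitz bounds
  have hlow : ∀ {α β : ℝ}, α ≠ β → |α - β| / L ≤ |htil α - htil β| := by
    intro α β hne
    have had : 0 < |α - β| := abs_pos.mpr (sub_ne_zero.mpr hne)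
    have h1 := (hLip α β hne).1
    rw [abs_div] at h1
    calc |α - β| / L = (1 / L) * |α - β| := by ring
      _ ≤ (|htil α - htil β| / |α - β|) * |α - β| :=
        mul_le_mul_of_nonneg_right h1 (abs_nonneg _)
      _ = |htil α - htil β| := div_mul_cancel₀ _ had.ne'
  have hup : ∀ α β : ℝ, |htil α - htil β| ≤ L * |α - β| := by
    intro α β
    rcases eq_or_ne α β with rfl | hne
    · simp
    · have had : 0 < |α - β| := abs_pos.mpr (sub_ne_zero.mpr hne)
      have h1 := (hLip α β hne).2
      rw [abs_div, div_le_iff₀ had] at h1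
      exact h1
  -- the key bound for the second factor
  have hk2 : ∀ α β : ℝ, |((htil α - α) - (htil β - β)) / (htil α - htil β)|
      ≤ L * (|(htil α - α) - (htil β - β)| / |α - β|) := by
    intro α β
    rcases eq_or_ne α β with rfl | hne
    · simp
    · have had : 0 < |α - β| := abs_pos.mpr (sub_ne_zero.mpr hne)
      have hlo := hlow hne
      have hpos : 0 < |α - β| / L := div_pos had hL0
      rw [abs_div]
      calc |(htil α - α) - (htil β - β)| / |htil α - htil β|
          ≤ |(htil α - α) - (htil β - β)| / (|α - β| / L) :=
            div_le_div_of_nonneg_left (abs_nonneg _) hpos hlo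
        _ = L * (|(htil α - α) - (htil β - β)| / |α - β|) := by
            field_simp
  -- FTC bounds
  have hFf : ∀ α β : ℝ, ‖f α - f β‖ ≤ ∫ s in uIoc β α, ‖deriv (⇑f) s‖ := by
    intro α β
    have hFTC : (∫ s in β..α, deriv (⇑f) s) = f α - f β :=
      intervalIntegral.integral_eq_sub_of_hasDerivAt
        (fun x _ => (hfd x).hasDerivAt) (hfdc.intervalIntegrable β α)
    rw [← hFTC]
    exact intervalIntegral.norm_integral_le_integral_norm_uIoc
  have hFh : ∀ α β : ℝ, |(htil α - α) - (htil β - β)| ≤ ∫ s in uIoc β α, ‖φh s‖ := by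
    intro α β
    have hFTC : (∫ s in β..α, φh s) = (htil α - α) - (htil β - β) :=
      intervalIntegral.integral_eq_sub_of_hasDerivAt
        (fun x _ => ((hdiff x).hasDerivAt.sub (hasDerivAt_id x)))
        (hφhc.intervalIntegrable β α)
    rw [← hFTC, ← Real.norm_eq_abs]
    exact intervalIntegral.norm_integral_le_integral_norm_uIoc
  -- ENNReal comparison with the Hardy kernels
  have hPle : ∀ α β : ℝ, ENNReal.ofReal (‖f α - f β‖ / |α - β|)
      ≤ (∫⁻ s in uIoc β α, (‖deriv (⇑f) s‖₊ : ℝ≥0∞)) / ENNReal.ofReal |α - β| := by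
    intro α β
    rcases eq_or_ne α β with rfl | hne
    · simp
    · have had : 0 < |α - β| := abs_pos.mpr (sub_ne_zero.mpr hne)
      rw [ENNReal.ofReal_div_of_pos had]
      apply ENNReal.div_le_div_right
      calc ENNReal.ofReal ‖f α - f β‖
          ≤ ENNReal.ofReal (∫ s in uIoc β α, ‖deriv (⇑f) s‖) :=
            ENNReal.ofReal_le_ofReal (hFf α β)
        _ = ∫⁻ s in uIoc β α, (‖deriv (⇑f) s‖₊ : ℝ≥0∞) := by
            rw [ofReal_integral_eq_lintegral_ofReal (hfdc.norm.integrableOn_uIoc)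
              (Filter.Eventually.of_forall fun s => norm_nonneg _)]
            exact lintegral_congr fun s => ofReal_norm _
  have hQle : ∀ α β : ℝ, ENNReal.ofReal (|(htil α - α) - (htil β - β)| / |α - β|)
      ≤ (∫⁻ s in uIoc β α, (‖φh s‖₊ : ℝ≥0∞)) / ENNReal.ofReal |α - β| := by
    intro α β
    rcases eq_or_ne α β with rfl | hne
    · simp
    · have had : 0 < |α - β| := abs_pos.mpr (sub_ne_zero.mpr hne)
      rw [ENNReal.ofReal_div_of_pos had]
      apply ENNReal.div_le_div_right
      calc ENNReal.ofReal |(htil α - α) - (htil β - β)|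
          ≤ ENNReal.ofReal (∫ s in uIoc β α, ‖φh s‖) :=
            ENNReal.ofReal_le_ofReal (hFh α β)
        _ = ∫⁻ s in uIoc β α, (‖φh s‖₊ : ℝ≥0∞) := by
            rw [ofReal_integral_eq_lintegral_ofReal (hφhc.norm.integrableOn_uIoc)
              (Filter.Eventually.of_forall fun s => norm_nonneg _)]
            exact lintegral_congr fun s => ofReal_norm _
  -- norms of the two kernel factors
  have hnk1 : ∀ α β : ℝ, ‖(f α - f β) / ((α - β : ℝ) : ℂ)‖ = ‖f α - f β‖ / |α - β| := by
    intro α β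
    rw [norm_div, Complex.norm_real, Real.norm_eq_abs]
  have hnk2 : ∀ α β : ℝ, ‖((((htil α - α) - (htil β - β)) / (htil α - htil β) : ℝ) : ℂ)‖
      = |((htil α - α) - (htil β - β)) / (htil α - htil β)| := by
    intro α β
    rw [Complex.norm_real, Real.norm_eq_abs]
  -- uniform bounds, for integrability
  obtain ⟨M, hMpos, hM⟩ : ∃ M : ℝ, 0 < M ∧ ∀ x, ‖deriv (⇑f) x‖ ≤ M := by
    obtain ⟨C, hCpos, hC⟩ := (SchwartzMap.derivCLM ℝ ℂ f).decay 0 0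
    refine ⟨C, hCpos, fun x => ?_⟩
    have h := hC x
    simpa [norm_iteratedFDeriv_zero, SchwartzMap.derivCLM_apply] using h
  have hlipf : ∀ α β : ℝ, ‖f α - f β‖ ≤ M * |α - β| := by
    intro α β
    calc ‖f α - f β‖ ≤ ∫ s in uIoc β α, ‖deriv (⇑f) s‖ := hFf α β
      _ ≤ ∫ s in uIoc β α, M := by
          apply setIntegral_mono_on hfdc.norm.integrableOn_uIoc
            (integrableOn_const (by rw [uIoc]; exact measure_Ioc_lt_top.ne))
            measurableSet_uIoc
          intro s _
          exact hM s
      _ = M * |α - β| := by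
          rw [setIntegral_const, uIoc, Real.volume_real_Ioc_of_le min_le_max, max_sub_min_eq_abs,
            smul_eq_mul]
          rw [abs_sub_comm]
          ring
  have hk1b : ∀ α β : ℝ, ‖(f α - f β) / ((α - β : ℝ) : ℂ)‖ ≤ M := by
    intro α β
    rw [hnk1]
    rcases eq_or_ne α β with rfl | hne
    · simp [hMpos.le]
    · have had : 0 < |α - β| := abs_pos.mpr (sub_ne_zero.mpr hne)
      rw [div_le_iff₀ had]
      exact hlipf α β
  have hk2b : ∀ α β : ℝ, ‖((((htil α - α) - (htil β - β)) / (htil α - htil β) : ℝ) : ℂ)‖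
      ≤ L * (L + 1) := by
    intro α β
    rw [hnk2]
    rcases eq_or_ne α β with rfl | hne
    · simp
      positivity
    · have had : 0 < |α - β| := abs_pos.mpr (sub_ne_zero.mpr hne)
      refine le_trans (hk2 α β) ?_
      have hnum : |(htil α - α) - (htil β - β)| ≤ (L + 1) * |α - β| := by
        calc |(htil α - α) - (htil β - β)| = |(htil α - htil β) - (α - β)| := by ring_nf
          _ ≤ |htil α - htil β| + |α - β| := abs_sub _ _
          _ ≤ L * |α - β| + |α - β| := by linarith [hup α β]
          _ = (L + 1) * |α - β| := by ring
      have : |(htil α - α) - (htil β - β)| / |α - β| ≤ L + 1 := by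
        rw [div_le_iff₀ had]
        exact hnum
      exact mul_le_mul_of_nonneg_left this hL0.le
  have hmeas_int : ∀ α : ℝ, Measurable (fun β : ℝ =>
      ((f α - f β) / ((α - β : ℝ) : ℂ)) *
        ((((htil α - α) - (htil β - β)) / (htil α - htil β) : ℝ) : ℂ) * g β) := by
    intro α
    apply Measurable.mul
    apply Measurable.mul
    · exact ((continuous_const.sub f.continuous).measurable).div
        ((Complex.continuous_ofReal.comp (continuous_const.sub continuous_id)).measurable)
    · exact Complex.measurable_ofReal.comp
        ((measurable_const.sub (hhc.sub continuous_id).measurable).div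
          (measurable_const.sub hhc.measurable))
    · exact g.continuous.measurable
  have hint : ∀ α : ℝ, Integrable (fun β : ℝ =>
      ((f α - f β) / ((α - β : ℝ) : ℂ)) *
        ((((htil α - α) - (htil β - β)) / (htil α - htil β) : ℝ) : ℂ) * g β) := by
    intro α
    apply Integrable.mono' ((g.integrable.norm).const_mul (M * (L * (L + 1))))
      (hmeas_int α).aestronglyMeasurable
    refine Filter.Eventually.of_forall fun β => ?_
    rw [norm_mul, norm_mul]
    exact mul_le_mul_of_nonneg_right
      (mul_le_mul (hk1b α β) (hk2b α β) (norm_nonneg _) hMpos.le) (norm_nonneg _)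
  refine ⟨hint, ?_⟩
  -- main estimate
  set P : ℝ → ℝ → ℝ≥0∞ := fun α β => ENNReal.ofReal (‖f α - f β‖ / |α - β|) with hP
  set Q : ℝ → ℝ → ℝ≥0∞ := fun α β =>
    ENNReal.ofReal (L * (|(htil α - α) - (htil β - β)| / |α - β|)) with hQ
  set Ef := ∫⁻ x, (‖deriv (⇑f) x‖₊ : ℝ≥0∞) ^ 2 with hEf
  set Eh := ∫⁻ x, (‖φh x‖₊ : ℝ≥0∞) ^ 2 with hEh
  set Eg := ∫⁻ x, (‖g x‖₊ : ℝ≥0∞) ^ 2 with hEg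
  set R : ℝ → ℝ≥0∞ := fun α => ∫⁻ β, (Q α β * (‖g β‖₊ : ℝ≥0∞)) ^ 2 with hR
  -- pointwise domination of the integrand
  have hptw : ∀ α β : ℝ, (‖((f α - f β) / ((α - β : ℝ) : ℂ)) *
        ((((htil α - α) - (htil β - β)) / (htil α - htil β) : ℝ) : ℂ) * g β‖₊ : ℝ≥0∞)
      ≤ P α β * (Q α β * (‖g β‖₊ : ℝ≥0∞)) := by
    intro α β
    rw [← enorm_eq_nnnorm, ← ofReal_norm, ← enorm_eq_nnnorm (g β), ← ofReal_norm (g β), norm_mul, norm_mul,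
      hnk1, hnk2, ENNReal.ofReal_mul (by positivity), ENNReal.ofReal_mul (by positivity),
      mul_assoc]
    exact mul_le_mul_right
      (mul_le_mul_left (ENNReal.ofReal_le_ofReal (hk2 α β)) _) _
  -- per-α measurability
  have hPm : ∀ α : ℝ, Measurable fun β => P α β := fun α =>
    ((continuous_const.sub f.continuous).norm.measurable.div
      ((continuous_const.sub continuous_id).abs.measurable)).ennreal_ofReal
  have hQGm : ∀ α : ℝ, Measurable fun β => Q α β * (‖g β‖₊ : ℝ≥0∞) := fun α =>
    ((measurable_const.mul
      (((continuous_const.sub (hhc.sub continuous_id)).abs.measurable).div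
        ((continuous_const.sub continuous_id).abs.measurable))).ennreal_ofReal).mul
      (g.continuous.measurable.nnnorm.coe_nnreal_ennreal)
  -- joint measurability
  have hQGm_joint : Measurable (Function.uncurry
      fun α β : ℝ => (Q α β * (‖g β‖₊ : ℝ≥0∞)) ^ 2) := by
    apply Measurable.pow_const
    refine Measurable.mul (f := fun x : ℝ × ℝ => Q x.1 x.2)
      (g := fun x : ℝ × ℝ => (‖g x.2‖₊ : ℝ≥0∞)) ?_ ?_
    · apply Measurable.ennreal_ofReal
      apply Measurable.mul measurable_const
      exact ((((hhc.comp continuous_fst).sub continuous_fst).sub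
          ((hhc.comp continuous_snd).sub continuous_snd)).abs.measurable).div
        ((continuous_fst.sub continuous_snd).abs.measurable)
    · exact ((g.continuous.comp continuous_snd).measurable.nnnorm.coe_nnreal_ennreal)
  have hRm : Measurable R := hQGm_joint.lintegral_prod_right'
  -- bound the value of S pointwise
  have hSb : ∀ α : ℝ, (‖((1 / Real.pi : ℝ) : ℂ) *
        ∫ β : ℝ, ((f α - f β) / ((α - β : ℝ) : ℂ)) *
          ((((htil α - α) - (htil β - β)) / (htil α - htil β) : ℝ) : ℂ) * g β‖₊ : ℝ≥0∞)
      ≤ ∫⁻ β, P α β * (Q α β * (‖g β‖₊ : ℝ≥0∞)) := by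
    intro α
    have hπ : (‖((1 / Real.pi : ℝ) : ℂ)‖₊ : ℝ≥0∞) ≤ 1 := by
      rw [← enorm_eq_nnnorm, ← ofReal_norm, Complex.norm_real, Real.norm_eq_abs]
      apply ENNReal.ofReal_le_one.mpr
      rw [abs_of_pos (by positivity)]
      rw [div_le_one Real.pi_pos]
      linarith [Real.pi_gt_three]
    rw [nnnorm_mul, ENNReal.coe_mul]
    calc (‖((1 / Real.pi : ℝ) : ℂ)‖₊ : ℝ≥0∞) * ‖∫ β : ℝ, _ * _ * g β‖₊
        ≤ 1 * (‖∫ β : ℝ, ((f α - f β) / ((α - β : ℝ) : ℂ)) *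
            ((((htil α - α) - (htil β - β)) / (htil α - htil β) : ℝ) : ℂ) * g β‖₊ : ℝ≥0∞) :=
          mul_le_mul_left hπ _
      _ = _ := one_mul _
      _ ≤ ∫⁻ β, (‖((f α - f β) / ((α - β : ℝ) : ℂ)) *
            ((((htil α - α) - (htil β - β)) / (htil α - htil β) : ℝ) : ℂ) * g β‖₊ : ℝ≥0∞) :=
          enorm_integral_le_lintegral_enorm _
      _ ≤ ∫⁻ β, P α β * (Q α β * (‖g β‖₊ : ℝ≥0∞)) := lintegral_mono (hptw α)
  -- Hardy bound in β for P
  have hHardyP : ∀ α : ℝ, (∫⁻ β, P α β ^ 2) ≤ 8 * Ef := by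
    intro α
    calc (∫⁻ β, P α β ^ 2)
        ≤ ∫⁻ β, ((∫⁻ s in uIoc β α, (‖deriv (⇑f) s‖₊ : ℝ≥0∞)) / ENNReal.ofReal |α - β|) ^ 2 :=
          lintegral_mono fun β => pow_le_pow_left' (hPle α β) 2
      _ ≤ 8 * Ef :=
          hardy_centered (fun s => (‖deriv (⇑f) s‖₊ : ℝ≥0∞))
            (hfdc.measurable.nnnorm.coe_nnreal_ennreal) α
  -- Hardy bound in α for Q
  have hHardyQ : ∀ β : ℝ, (∫⁻ α, Q α β ^ 2) ≤ ENNReal.ofReal L ^ 2 * (8 * Eh) := by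
    intro β
    have hsplit : ∀ α : ℝ, Q α β ≤ ENNReal.ofReal L *
        ((∫⁻ s in uIoc α β, (‖φh s‖₊ : ℝ≥0∞)) / ENNReal.ofReal |β - α|) := by
      intro α
      calc Q α β = ENNReal.ofReal L *
            ENNReal.ofReal (|(htil α - α) - (htil β - β)| / |α - β|) :=
            ENNReal.ofReal_mul hL0.le
        _ ≤ ENNReal.ofReal L *
            ((∫⁻ s in uIoc β α, (‖φh s‖₊ : ℝ≥0∞)) / ENNReal.ofReal |α - β|) :=
            mul_le_mul_right (hQle α β) _
        _ = ENNReal.ofReal L *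
            ((∫⁻ s in uIoc α β, (‖φh s‖₊ : ℝ≥0∞)) / ENNReal.ofReal |β - α|) := by
            rw [uIoc_comm, abs_sub_comm]
    calc (∫⁻ α, Q α β ^ 2)
        ≤ ∫⁻ α, ENNReal.ofReal L ^ 2 *
            ((∫⁻ s in uIoc α β, (‖φh s‖₊ : ℝ≥0∞)) / ENNReal.ofReal |β - α|) ^ 2 := by
          apply lintegral_mono
          intro α
          calc Q α β ^ 2 ≤ (ENNReal.ofReal L *
              ((∫⁻ s in uIoc α β, (‖φh s‖₊ : ℝ≥0∞)) / ENNReal.ofReal |β - α|)) ^ 2 :=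
              pow_le_pow_left' (hsplit α) 2
            _ = ENNReal.ofReal L ^ 2 *
              ((∫⁻ s in uIoc α β, (‖φh s‖₊ : ℝ≥0∞)) / ENNReal.ofReal |β - α|) ^ 2 :=
              mul_pow _ _ 2
      _ = ENNReal.ofReal L ^ 2 * ∫⁻ α,
            ((∫⁻ s in uIoc α β, (‖φh s‖₊ : ℝ≥0∞)) / ENNReal.ofReal |β - α|) ^ 2 :=
          lintegral_const_mul' _ _ (ENNReal.pow_ne_top ENNReal.ofReal_ne_top)
      _ ≤ ENNReal.ofReal L ^ 2 * (8 * Eh) :=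
          mul_le_mul_right
            (hardy_centered (fun s => (‖φh s‖₊ : ℝ≥0∞))
              (hφhc.measurable.nnnorm.coe_nnreal_ennreal) β) _
  -- swap and conclude for R
  have hswap : (∫⁻ α, R α) ≤ ENNReal.ofReal L ^ 2 * (8 * Eh) * Eg := by
    have h1 : (∫⁻ α, R α) = ∫⁻ β, ∫⁻ α, (Q α β * (‖g β‖₊ : ℝ≥0∞)) ^ 2 :=
      lintegral_lintegral_swap hQGm_joint.aemeasurable
    rw [h1]
    have h2 : ∀ β : ℝ, (∫⁻ α, (Q α β * (‖g β‖₊ : ℝ≥0∞)) ^ 2)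
        = (∫⁻ α, Q α β ^ 2) * (‖g β‖₊ : ℝ≥0∞) ^ 2 := by
      intro β
      simp_rw [mul_pow]
      exact lintegral_mul_const _ (by
        apply Measurable.pow_const
        apply Measurable.ennreal_ofReal
        apply Measurable.mul measurable_const
        exact ((((hhc.sub continuous_id).sub continuous_const).abs.measurable).div
          ((continuous_id.sub continuous_const).abs.measurable)))
    calc (∫⁻ β, ∫⁻ α, (Q α β * (‖g β‖₊ : ℝ≥0∞)) ^ 2)
        = ∫⁻ β, (∫⁻ α, Q α β ^ 2) * (‖g β‖₊ : ℝ≥0∞) ^ 2 := lintegral_congr h2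
      _ ≤ ∫⁻ β, (ENNReal.ofReal L ^ 2 * (8 * Eh)) * (‖g β‖₊ : ℝ≥0∞) ^ 2 :=
          lintegral_mono fun β => mul_le_mul_left (hHardyQ β) _
      _ = ENNReal.ofReal L ^ 2 * (8 * Eh) * Eg :=
          lintegral_const_mul _ ((g.continuous.measurable.nnnorm.coe_nnreal_ennreal).pow_const 2)
  -- total bound on the square integral
  have htotal : (∫⁻ α, (‖((1 / Real.pi : ℝ) : ℂ) *
        ∫ β : ℝ, ((f α - f β) / ((α - β : ℝ) : ℂ)) *
          ((((htil α - α) - (htil β - β)) / (htil α - htil β) : ℝ) : ℂ) * g β‖₊ : ℝ≥0∞) ^ 2)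
      ≤ ENNReal.ofReal (8 * L) ^ 2 * (Ef * (Eh * Eg)) := by
    calc (∫⁻ α, (‖((1 / Real.pi : ℝ) : ℂ) *
          ∫ β : ℝ, ((f α - f β) / ((α - β : ℝ) : ℂ)) *
            ((((htil α - α) - (htil β - β)) / (htil α - htil β) : ℝ) : ℂ) * g β‖₊ : ℝ≥0∞) ^ 2)
        ≤ ∫⁻ α, (8 * Ef) * R α := by
          apply lintegral_mono
          intro α
          calc (‖((1 / Real.pi : ℝ) : ℂ) * ∫ β : ℝ, _ * _ * g β‖₊ : ℝ≥0∞) ^ 2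
              ≤ (∫⁻ β, P α β * (Q α β * (‖g β‖₊ : ℝ≥0∞))) ^ 2 :=
                pow_le_pow_left' (hSb α) 2
            _ ≤ (∫⁻ β, P α β ^ 2) * R α :=
                lintegral_sq_cs volume (hPm α).aemeasurable (hQGm α).aemeasurable
            _ ≤ (8 * Ef) * R α := mul_le_mul_left (hHardyP α) _
      _ = (8 * Ef) * ∫⁻ α, R α := lintegral_const_mul _ hRm
      _ ≤ (8 * Ef) * (ENNReal.ofReal L ^ 2 * (8 * Eh) * Eg) := mul_le_mul_right hswap _
      _ = ENNReal.ofReal (8 * L) ^ 2 * (Ef * (Eh * Eg)) := by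
          rw [← ENNReal.ofReal_pow (by positivity : (0:ℝ) ≤ 8 * L),
            show ((8:ℝ) * L) ^ 2 = 64 * L ^ 2 by ring, ENNReal.ofReal_mul (by norm_num),
            ENNReal.ofReal_pow hL0.le, ENNReal.ofReal_ofNat]
          ring
  -- conclude
  rw [elp2, elp2, elp2, elp2]
  calc (∫⁻ α, (‖((1 / Real.pi : ℝ) : ℂ) *
        ∫ β : ℝ, ((f α - f β) / ((α - β : ℝ) : ℂ)) *
          ((((htil α - α) - (htil β - β)) / (htil α - htil β) : ℝ) : ℂ) * g β‖₊ : ℝ≥0∞) ^ 2)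
          ^ (1/2 : ℝ)
      ≤ (ENNReal.ofReal (8 * L) ^ 2 * (Ef * (Eh * Eg))) ^ (1/2 : ℝ) :=
        ENNReal.rpow_le_rpow htotal (by norm_num)
    _ = ENNReal.ofReal (8 * L) * Ef ^ (1/2 : ℝ) * Eh ^ (1/2 : ℝ) * Eg ^ (1/2 : ℝ) := by
        rw [ENNReal.mul_rpow_of_nonneg _ _ (by norm_num : (0:ℝ) ≤ 1/2),
          ENNReal.mul_rpow_of_nonneg Ef _ (by norm_num : (0:ℝ) ≤ 1/2),
          ENNReal.mul_rpow_of_nonneg Eh _ (by norm_num : (0:ℝ) ≤ 1/2),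
          ← enn_sq, ← ENNReal.rpow_mul]
        norm_num
        ring
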